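/- arXiv:0906.2487 — 4 statements merged into one kernel-verified Lean document; each statement's English description precedes it below -/
import Mathlib

section
/- For every real β ≥ 1/3 and every x > 0, one has β x² − x / tanh(x) ≥ −1. -/
open Real

lemma aux_sinh_le (x : ℝ) (hx : 0 ≤ x) : Real.sinh x ≤ x * Real.cosh x := by
  have h : MonotoneOn (fun y : ℝ => y * Real.cosh y - Real.sinh y) (Set.Ici 0) := by
    apply monotoneOn_of_deriv_nonneg (convex_Ici 0)
    · fun_prop
    · fun_prop
    · intro y hy
      rw [interior_Ici] at hy
      have : deriv (fun y : ℝ => y * Real.cosh y - Real.sinh y) y = y * Real.sinh y := by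
        rw [deriv_fun_sub (by fun_prop) (by fun_prop), deriv_fun_mul (by fun_prop) (by fun_prop)]
        simp
      rw [this]
      exact mul_nonneg hy.le (Real.sinh_nonneg_iff.mpr hy.le)
  have := h (Set.self_mem_Ici) (Set.mem_Ici.mpr hx) hx
  simp at this
  linarith

lemma aux_main (x : ℝ) (hx : 0 ≤ x) : x * Real.cosh x ≤ (1 + x ^ 2 / 3) * Real.sinh x := by
  have h : MonotoneOn (fun y : ℝ => (1 + y ^ 2 / 3) * Real.sinh y - y * Real.cosh y)
      (Set.Ici 0) := by
    apply monotoneOn_of_deriv_nonneg (convex_Ici 0)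
    · fun_prop
    · fun_prop
    · intro y hy
      rw [interior_Ici] at hy
      have : deriv (fun y : ℝ => (1 + y ^ 2 / 3) * Real.sinh y - y * Real.cosh y) y
          = y / 3 * (y * Real.cosh y - Real.sinh y) := by
        rw [deriv_fun_sub (by fun_prop) (by fun_prop), deriv_fun_mul (by fun_prop) (by fun_prop),
          deriv_fun_mul (by fun_prop) (by fun_prop)]
        simp
        ring
      rw [this]
      have h2 := aux_sinh_le y hy.le
      have h3 : (0:ℝ) < y := hy
      nlinarith
  have := h (Set.self_mem_Ici) (Set.mem_Ici.mpr hx) hx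
  simp at this
  linarith

theorem stmt0 (β : ℝ) (hβ : 1/3 ≤ β) (x : ℝ) (hx : 0 < x) :
    β * x ^ 2 - x / Real.tanh x ≥ -1 := by
  have hs : 0 < Real.sinh x := Real.sinh_pos_iff.mpr hx
  have ht : Real.tanh x = Real.sinh x / Real.cosh x := Real.tanh_eq_sinh_div_cosh x
  have hc : 0 < Real.cosh x := Real.cosh_pos x
  have key : x / Real.tanh x ≤ 1 + x ^ 2 / 3 := by
    rw [ht, div_div_eq_mul_div, div_le_iff₀ hs]
    have := aux_main x hx.le
    linarith
  nlinarith [sq_nonneg x]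
end

section
/- Let β > 1/3 and define g(x) = 2βx(e^{2x} + e^{-2x}) − (e^{2x} − e^{-2x}) + (4 − 4β)x. Then g(x) ≥ 0 for all x ≥ 0. -/
open Real

private lemma expneg_deriv (t : ℝ) : HasDerivAt (fun t : ℝ => Real.exp (-t)) (-Real.exp (-t)) t := by
  simpa [Function.comp_def] using (Real.hasDerivAt_exp (-t)).comp t ((hasDerivAt_id t).neg)

private lemma key (f f' : ℝ → ℝ) (hf : ∀ t, HasDerivAt f (f' t) t)
    (h0 : f 0 = 0) (hpos : ∀ t, 0 ≤ t → 0 ≤ f' t) : ∀ t, 0 ≤ t → 0 ≤ f t := by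
  intro t ht
  have hmono : MonotoneOn f (Set.Ici 0) := by
    apply monotoneOn_of_deriv_nonneg (convex_Ici 0)
    · exact fun x _ => (hf x).continuousAt.continuousWithinAt
    · exact fun x _ => ((hf x).differentiableAt).differentiableWithinAt
    · intro x hx
      rw [interior_Ici] at hx
      rw [(hf x).deriv]
      exact hpos x hx.le
  have h := hmono Set.self_mem_Ici (Set.mem_Ici.2 ht) ht
  rw [h0] at h
  exact h

private lemma h2_nonneg : ∀ t, 0 ≤ t →
    0 ≤ t * (exp t + exp (-t)) - (exp t - exp (-t)) := by
  apply key _ (fun t => t * (exp t - exp (-t)))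
  · intro t
    have := (((hasDerivAt_id t).mul ((Real.hasDerivAt_exp t).add (expneg_deriv t))).sub
      ((Real.hasDerivAt_exp t).sub (expneg_deriv t)))
    refine this.congr_deriv ?_
    simp only [Pi.add_apply, Pi.sub_apply, Pi.mul_apply, id_eq]; ring
  · simp
  · intro t ht
    have : exp (-t) ≤ exp t := exp_le_exp.2 (by linarith)
    nlinarith

private lemma h1_nonneg : ∀ t, 0 ≤ t →
    0 ≤ t * (exp t - exp (-t)) + 4 - 2 * (exp t + exp (-t)) := by
  apply key _ (fun t => t * (exp t + exp (-t)) - (exp t - exp (-t)))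
  · intro t
    have := ((((hasDerivAt_id t).mul ((Real.hasDerivAt_exp t).sub (expneg_deriv t))).add_const 4).sub
      (((Real.hasDerivAt_exp t).add (expneg_deriv t)).const_mul 2))
    refine this.congr_deriv ?_
    simp only [Pi.add_apply, Pi.sub_apply, Pi.mul_apply, id_eq]; ring
  · norm_num
  · exact h2_nonneg

private lemma h0_nonneg : ∀ t, 0 ≤ t →
    0 ≤ t * (exp t + exp (-t)) + 4 * t - 3 * (exp t - exp (-t)) := by
  apply key _ (fun t => t * (exp t - exp (-t)) + 4 - 2 * (exp t + exp (-t)))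
  · intro t
    have := ((((hasDerivAt_id t).mul ((Real.hasDerivAt_exp t).add (expneg_deriv t))).add
      ((hasDerivAt_id t).const_mul 4)).sub
      (((Real.hasDerivAt_exp t).sub (expneg_deriv t)).const_mul 3))
    refine this.congr_deriv ?_
    simp only [Pi.add_apply, Pi.sub_apply, Pi.mul_apply, id_eq]; ring
  · simp
  · exact h1_nonneg

theorem stmt1 (β : ℝ) (hβ : 1/3 < β) (x : ℝ) (hx : 0 ≤ x) :
    2 * β * x * (Real.exp (2*x) + Real.exp (-(2*x)))
      - (Real.exp (2*x) - Real.exp (-(2*x))) + (4 - 4*β) * x ≥ 0 := by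
  have h := h0_nonneg (2*x) (by linarith)
  have hmul : Real.exp (2*x) * Real.exp (-(2*x)) = 1 := by
    rw [← Real.exp_add]; simp
  have h1 : 1 ≤ Real.exp (2*x) := Real.one_le_exp (by linarith)
  have hpos : 0 < Real.exp (-(2*x)) := Real.exp_pos _
  have hv1 : Real.exp (-(2*x)) ≤ 1 := by
    nlinarith [mul_nonneg (sub_nonneg.2 h1) hpos.le]
  have hC2 : 2 ≤ Real.exp (2*x) + Real.exp (-(2*x)) := by
    nlinarith [mul_nonneg (sub_nonneg.2 h1) (sub_nonneg.2 hv1)]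
  have hA : 0 ≤ (β - 1/3) * (2*x) * (Real.exp (2*x) + Real.exp (-(2*x)) - 2) :=
    mul_nonneg (mul_nonneg (by linarith) (by linarith)) (by linarith)
  nlinarith [h, hA]
end

section
/- There exists a constant C > 0 such that for every ω ≥ 0: ∫_{-1}^{0} cosh²(ω(z+1)) dz ≤ C · cosh²(ω) / (1 + ω). -/
open Real

theorem stmt4 : ∃ C : ℝ, 0 < C ∧ ∀ ω : ℝ, 0 ≤ ω →
    (∫ z in (-1 : ℝ)..0, Real.cosh (ω * (z + 1)) ^ 2) ≤ C * Real.cosh ω ^ 2 / (1 + ω) := by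
  refine ⟨3, by norm_num, fun ω hω => ?_⟩
  have hcont : Continuous fun z : ℝ => Real.cosh (ω * (z + 1)) ^ 2 := by continuity
  have hcosh2pos : 0 < Real.cosh ω ^ 2 := by positivity
  rcases le_or_gt ω 2 with hω2 | hω2
  · -- small ω: bound integrand by cosh ω ^ 2
    have hbd : (∫ z in (-1:ℝ)..0, Real.cosh (ω * (z + 1)) ^ 2)
        ≤ ∫ _ in (-1:ℝ)..0, Real.cosh ω ^ 2 := by
      apply intervalIntegral.integral_mono_on (by norm_num)
        (hcont.intervalIntegrable _ _) intervalIntegrable_const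
      intro z hz
      have hz1 : |z + 1| ≤ 1 := by
        rw [abs_le]; constructor <;> nlinarith [hz.1, hz.2]
      have h1 : |ω * (z + 1)| ≤ |ω| := by
        rw [abs_mul]
        calc |ω| * |z + 1| ≤ |ω| * 1 := by
              exact mul_le_mul_of_nonneg_left hz1 (abs_nonneg ω)
          _ = |ω| := mul_one _
      have h2 : Real.cosh (ω * (z + 1)) ≤ Real.cosh ω := Real.cosh_le_cosh.2 h1
      exact pow_le_pow_left₀ (Real.cosh_pos _).le h2 2
    have hconst : (∫ _ in (-1:ℝ)..0, Real.cosh ω ^ 2) = Real.cosh ω ^ 2 := by simp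
    rw [hconst] at hbd
    have h1ω : 0 < 1 + ω := by linarith
    calc (∫ z in (-1:ℝ)..0, Real.cosh (ω * (z + 1)) ^ 2) ≤ Real.cosh ω ^ 2 := hbd
      _ ≤ 3 * Real.cosh ω ^ 2 / (1 + ω) := by
          rw [le_div_iff₀ h1ω]; nlinarith
  · -- large ω: bound integrand by exp (2ω(z+1))
    have hωpos : 0 < ω := by linarith
    have hbd : (∫ z in (-1:ℝ)..0, Real.cosh (ω * (z + 1)) ^ 2)
        ≤ ∫ z in (-1:ℝ)..0, Real.exp (2 * ω * (z + 1)) := by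
      apply intervalIntegral.integral_mono_on (by norm_num)
        (hcont.intervalIntegrable _ _)
        ((Continuous.intervalIntegrable (by continuity) _ _))
      intro z hz
      have hznn : 0 ≤ ω * (z + 1) := by nlinarith [hz.1, hz.2]
      have h1 : Real.cosh (ω * (z + 1)) ≤ Real.exp (ω * (z + 1)) := by
        rw [Real.cosh_eq]
        have := Real.exp_le_exp.2 (by linarith : -(ω * (z + 1)) ≤ ω * (z + 1))
        linarith
      calc Real.cosh (ω * (z + 1)) ^ 2 ≤ Real.exp (ω * (z + 1)) ^ 2 :=
            pow_le_pow_left₀ (Real.cosh_pos _).le h1 2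
        _ = Real.exp (2 * ω * (z + 1)) := by
            rw [← Real.exp_nat_mul]; ring_nf
    have hint : (∫ z in (-1:ℝ)..0, Real.exp (2 * ω * (z + 1)))
        = Real.exp (2 * ω) / (2 * ω) - 1 / (2 * ω) := by
      have hderiv : ∀ z ∈ Set.uIcc (-1:ℝ) 0,
          HasDerivAt (fun z => Real.exp (2 * ω * (z + 1)) / (2 * ω))
            (Real.exp (2 * ω * (z + 1))) z := by
        intro z _
        have h1 : HasDerivAt (fun z : ℝ => 2 * ω * (z + 1)) (2 * ω) z := by
          simpa using ((hasDerivAt_id z).add_const 1).const_mul (2 * ω)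
        have h2 := (Real.hasDerivAt_exp (2 * ω * (z + 1))).comp z h1
        have h3 := h2.div_const (2 * ω)
        have hne : (2 * ω) ≠ 0 := by positivity
        simpa [mul_div_assoc, div_self hne] using h3
      rw [intervalIntegral.integral_eq_sub_of_hasDerivAt hderiv
        ((Continuous.intervalIntegrable (by continuity) _ _))]
      norm_num
    rw [hint] at hbd
    have hexp : Real.exp (2 * ω) ≤ 4 * Real.cosh ω ^ 2 := by
      have h1 : Real.exp ω ≤ 2 * Real.cosh ω := by
        rw [Real.cosh_eq]; have := Real.exp_pos (-ω); linarith
      calc Real.exp (2 * ω) = Real.exp ω ^ 2 := by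
            rw [← Real.exp_nat_mul]; ring_nf
        _ ≤ (2 * Real.cosh ω) ^ 2 := pow_le_pow_left₀ (Real.exp_pos _).le h1 2
        _ = 4 * Real.cosh ω ^ 2 := by ring
    have h1ω : 0 < 1 + ω := by linarith
    calc (∫ z in (-1:ℝ)..0, Real.cosh (ω * (z + 1)) ^ 2)
        ≤ Real.exp (2 * ω) / (2 * ω) - 1 / (2 * ω) := hbd
      _ ≤ 4 * Real.cosh ω ^ 2 / (2 * ω) := by
          have h0 : 0 < 1 / (2 * ω) := by positivity
          have hh : Real.exp (2 * ω) / (2 * ω) ≤ 4 * Real.cosh ω ^ 2 / (2 * ω) := by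
            gcongr
          linarith
      _ ≤ 3 * Real.cosh ω ^ 2 / (1 + ω) := by
          rw [div_le_div_iff₀ (by positivity) h1ω]
          nlinarith
end

section
/- Let L be an n×n complex Hermitian matrix and J an n×n real skew-symmetric matrix. Suppose J L u₁ = σ₁ u₁ and J L u₂ = σ₂ u₂ with Re(σ₁) > 0 and Re(σ₂) > 0. Then ⟨L u₁, u₂⟩ = 0 with respect to the complex inner product on ℂⁿ. -/
theorem stmt14 (n : ℕ) (L J : Matrix (Fin n) (Fin n) ℂ)
    (hL : L.IsHermitian) (hJreal : ∀ i j, (J i j).im = 0)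
    (hJskew : J.transpose = -J)
    (u₁ u₂ : Fin n → ℂ) (σ₁ σ₂ : ℂ)
    (h₁ : (J * L).mulVec u₁ = σ₁ • u₁) (h₂ : (J * L).mulVec u₂ = σ₂ • u₂)
    (hσ₁ : 0 < σ₁.re) (hσ₂ : 0 < σ₂.re) :
    dotProduct (star u₂) (L.mulVec u₁) = 0 := by
  have hJH : J.conjTranspose = -J := by
    ext i j
    have h := congrFun (congrFun hJskew i) j
    simp only [Matrix.transpose_apply, Matrix.neg_apply] at h
    simp only [Matrix.conjTranspose_apply, Matrix.neg_apply, h, star_neg]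
    congr 1
    exact Complex.conj_eq_iff_im.mpr (hJreal i j)
  have hJLH : (J * L).conjTranspose = -(L * J) := by
    rw [Matrix.conjTranspose_mul, hL.eq, hJH, Matrix.mul_neg]
  set d := dotProduct (star u₂) (L.mulVec u₁) with hd
  have key : (σ₁ + star σ₂) * d = 0 := by
    have t1 : σ₁ * d = dotProduct (star u₂) ((L * (J * L)).mulVec u₁) := by
      rw [← Matrix.mulVec_mulVec, h₁, Matrix.mulVec_smul, hd,
        dotProduct_smul, smul_eq_mul]
    have t2 : star σ₂ * d
        = dotProduct (star u₂) (((J * L).conjTranspose * L).mulVec u₁) := by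
      rw [← Matrix.mulVec_mulVec, Matrix.dotProduct_mulVec, ← Matrix.star_mulVec,
        h₂, star_smul, smul_dotProduct, hd, smul_eq_mul]
    rw [add_mul, t1, t2, hJLH, Matrix.neg_mul, Matrix.neg_mulVec,
      dotProduct_neg, Matrix.mul_assoc]
    ring
  have hne : σ₁ + star σ₂ ≠ 0 := by
    intro h
    have : (σ₁ + star σ₂).re = 0 := by rw [h]; simp
    simp [Complex.add_re, Complex.conj_re] at this
    linarith
  exact (mul_eq_zero.mp key).resolve_left hne
end
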